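/- Let s satisfy s''(t) = 6 t - 6 s(t)^2 on (0, ∞) with 0 < s(t) < √(3t) for t > 0. Let 0 < a < b and suppose s(t) < √t for all t ∈ (a, b). Then b - a < π · 6^{-1/2} · a^{-1/4}. -/

import Mathlib

open Set Real

theorem oscillation_interval_upper_bound
    (s : ℝ → ℝ)
    (hdiff : ∀ t ∈ Ioi (0 : ℝ), DifferentiableAt ℝ s t ∧ DifferentiableAt ℝ (deriv s) t)
    (heq : ∀ t ∈ Ioi (0 : ℝ), deriv (deriv s) t = 6 * t - 6 * (s t) ^ 2)
    (hbd : ∀ t : ℝ, 0 < t → 0 < s t ∧ s t < Real.sqrt (3 * t))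
    (a b : ℝ) (ha : 0 < a) (hab : a < b)
    (hbelow : ∀ t ∈ Ioo a b, s t < Real.sqrt t) :
    b - a < π * (6 : ℝ) ^ (-(1 : ℝ) / 2) * a ^ (-(1 : ℝ) / 4) := by
  by_contra hcon
  push_neg at hcon
  have hsa : 0 < Real.sqrt a := Real.sqrt_pos.mpr ha
  set k : ℝ := Real.sqrt (6 * Real.sqrt a) with hkdef
  have hk0 : 0 < k := Real.sqrt_pos.mpr (by positivity)
  have hk2 : k ^ 2 = 6 * Real.sqrt a := Real.sq_sqrt (by positivity)
  have hkalt : k = (6 : ℝ) ^ ((1:ℝ)/2) * a ^ ((1:ℝ)/4) := by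
    rw [hkdef, Real.sqrt_mul (by norm_num : (0:ℝ) ≤ 6),
      Real.sqrt_eq_rpow 6, Real.sqrt_eq_rpow (Real.sqrt a), Real.sqrt_eq_rpow a,
      ← Real.rpow_mul ha.le]
    norm_num
  have hRHS : π * (6 : ℝ) ^ (-(1 : ℝ) / 2) * a ^ (-(1 : ℝ) / 4) = π / k := by
    rw [hkalt, show (-(1:ℝ)/2) = -((1:ℝ)/2) by ring, show (-(1:ℝ)/4) = -((1:ℝ)/4) by ring,
      Real.rpow_neg (by norm_num : (0:ℝ) ≤ 6), Real.rpow_neg ha.le]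
    have h1 : (0:ℝ) < (6:ℝ) ^ ((1:ℝ)/2) := Real.rpow_pos_of_pos (by norm_num) _
    have h2 : (0:ℝ) < a ^ ((1:ℝ)/4) := Real.rpow_pos_of_pos ha _
    field_simp
  rw [hRHS] at hcon
  set c : ℝ := a + π / k with hcdef
  have hac : a < c := by
    have : 0 < π / k := div_pos Real.pi_pos hk0
    simp [hcdef]; linarith
  have hcb : c ≤ b := by
    have : π / k ≤ b - a := hcon
    simp [hcdef]; linarith
  have hIccpos : Set.Icc a c ⊆ Set.Ioi (0:ℝ) := fun x hx => lt_of_lt_of_le ha hx.1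
  set F : ℝ → ℝ := fun t => Real.sqrt t - s t with hF
  set G : ℝ → ℝ := fun t => (2 * Real.sqrt t)⁻¹ - deriv s t with hG
  have hFderiv : ∀ t ∈ Set.Ioi (0:ℝ), HasDerivAt F (G t) t := by
    intro t ht
    have h1 : HasDerivAt Real.sqrt (1 / (2 * Real.sqrt t)) t :=
      Real.hasDerivAt_sqrt (ne_of_gt ht)
    have h2 := h1.sub (hdiff t ht).1.hasDerivAt
    exact h2.congr_deriv (by simp only [hG, one_div])
  have hFderiv' : ∀ t ∈ Set.Ioi (0:ℝ), deriv F t = G t := fun t ht => (hFderiv t ht).deriv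
  set Q : ℝ → ℝ := fun t => -(2 * (1 / (2 * Real.sqrt t))) / (2 * Real.sqrt t) ^ 2 with hQ
  have hQneg : ∀ t ∈ Set.Ioi (0:ℝ), Q t < 0 := by
    intro t ht
    have hsq : 0 < Real.sqrt t := Real.sqrt_pos.mpr ht
    have hnum : -(2 * (1 / (2 * Real.sqrt t))) < 0 := by
      have : 0 < 2 * (1 / (2 * Real.sqrt t)) := by positivity
      linarith
    exact div_neg_of_neg_of_pos hnum (by positivity)
  have hGderiv : ∀ t ∈ Set.Ioi (0:ℝ),
      HasDerivAt G (Q t - (6 * t - 6 * (s t) ^ 2)) t := by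
    intro t ht
    have hsq : 0 < Real.sqrt t := Real.sqrt_pos.mpr ht
    have h1 : HasDerivAt (fun t => 2 * Real.sqrt t) (2 * (1 / (2 * Real.sqrt t))) t :=
      (Real.hasDerivAt_sqrt (ne_of_gt ht)).const_mul 2
    have h2 : HasDerivAt (fun t => (2 * Real.sqrt t)⁻¹) (Q t) t :=
      h1.inv (by positivity)
    have h3 : HasDerivAt (deriv s) (deriv (deriv s) t) t := (hdiff t ht).2.hasDerivAt
    rw [heq t ht] at h3
    exact h2.sub h3
  have hF2 : ∀ t ∈ Set.Ioi (0:ℝ),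
      HasDerivAt (deriv F) (Q t - (6 * t - 6 * (s t) ^ 2)) t := by
    intro t ht
    refine (hGderiv t ht).congr_of_eventuallyEq ?_
    filter_upwards [Ioi_mem_nhds ht] with x hx
    exact hFderiv' x hx
  set g : ℝ → ℝ := fun t => Real.sin (k * (t - a)) with hg
  set g1 : ℝ → ℝ := fun t => k * Real.cos (k * (t - a)) with hg1
  have hlin : ∀ t : ℝ, HasDerivAt (fun t => k * (t - a)) k t := by
    intro t
    simpa using ((hasDerivAt_id t).sub_const a).const_mul k
  have hgderiv : ∀ t : ℝ, HasDerivAt g (g1 t) t := by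
    intro t
    have h := (Real.hasDerivAt_sin (k * (t - a))).comp t (hlin t)
    exact h.congr_deriv (by simp only [hg1]; ring)
  have hg1deriv : ∀ t : ℝ, HasDerivAt g1 (-(k ^ 2) * g t) t := by
    intro t
    have h := ((Real.hasDerivAt_cos (k * (t - a))).comp t (hlin t)).const_mul k
    exact h.congr_deriv (by simp only [hg]; ring)
  set W : ℝ → ℝ := fun t => F t * g1 t - deriv F t * g t with hW
  have hWderiv : ∀ t ∈ Set.Ioi (0:ℝ),
      HasDerivAt W ((-(k ^ 2 * F t + (Q t - (6 * t - 6 * (s t) ^ 2)))) * g t) t := by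
    intro t ht
    have h1 := (hFderiv t ht).mul (hg1deriv t)
    have h2 := (hF2 t ht).mul (hgderiv t)
    have h3 := h1.sub h2
    exact h3.congr_deriv (by rw [hFderiv' t ht]; ring)
  have hFpos : ∀ t ∈ Set.Ioo a c, 0 < F t := by
    intro t ht
    have h := hbelow t ⟨ht.1, lt_of_lt_of_le ht.2 hcb⟩
    simp only [hF]
    linarith
  have hgpos : ∀ t ∈ Set.Ioo a c, 0 < g t := by
    intro t ht
    apply Real.sin_pos_of_pos_of_lt_pi
    · have : 0 < t - a := by linarith [ht.1]
      positivity
    · have h1 : t - a < π / k := by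
        have := ht.2
        simp [hcdef] at this ⊢
        linarith
      calc k * (t - a) < k * (π / k) := by
            exact mul_lt_mul_of_pos_left h1 hk0
        _ = π := by field_simp
  have hderivpos : ∀ t ∈ Set.Ioo a c, 0 < deriv W t := by
    intro t ht
    have ht0 : t ∈ Set.Ioi (0:ℝ) := lt_trans ha ht.1
    rw [(hWderiv t ht0).deriv]
    have hFt := hFpos t ht
    have hgt := hgpos t ht
    have ht0' : (0:ℝ) < t := ht0
    have hsqt : Real.sqrt t ^ 2 = t := Real.sq_sqrt ht0'.le
    have hfact : 6 * t - 6 * (s t) ^ 2 = 6 * (Real.sqrt t + s t) * F t := by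
      simp only [hF]
      nlinarith [hsqt]
    have hsge : Real.sqrt a ≤ Real.sqrt t := Real.sqrt_le_sqrt ht.1.le
    have hspos : 0 < s t := (hbd t ht0').1
    have hQt := hQneg t ht0
    have hX : k ^ 2 * F t + (Q t - (6 * t - 6 * (s t) ^ 2)) < 0 := by
      rw [hfact, hk2]
      nlinarith [mul_le_mul_of_nonneg_right hsge hFt.le, mul_pos hspos hFt]
    have := mul_pos (neg_pos.mpr hX) hgt
    linarith
  have hWcont : ContinuousOn W (Set.Icc a c) := fun x hx =>
    ((hWderiv x (hIccpos hx)).continuousAt).continuousWithinAt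
  have hmono : StrictMonoOn W (Set.Icc a c) := by
    apply strictMonoOn_of_deriv_pos (convex_Icc a c) hWcont
    intro x hx
    rw [interior_Icc] at hx
    exact hderivpos x hx
  have hWlt : W a < W c :=
    hmono (left_mem_Icc.mpr hac.le) (right_mem_Icc.mpr hac.le) hac
  have hFnn : ∀ x ∈ Set.Icc a b, 0 ≤ F x := by
    intro x hx
    have hx0 : x ∈ Set.Ioi (0:ℝ) := lt_of_lt_of_le ha hx.1
    have hcont : ContinuousAt F x := (hFderiv x hx0).continuousAt
    have hxc : x ∈ closure (Set.Ioo a b) := by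
      rw [closure_Ioo hab.ne]; exact hx
    haveI hne : (nhdsWithin x (Set.Ioo a b)).NeBot :=
      mem_closure_iff_nhdsWithin_neBot.mp hxc
    refine ge_of_tendsto
      ((hcont.continuousWithinAt (s := Set.Ioo a b)).tendsto) ?_
    filter_upwards [self_mem_nhdsWithin] with t ht
    have := hbelow t ht
    simp only [hF]
    linarith
  have hca : k * (c - a) = π := by
    have : c - a = π / k := by simp [hcdef]
    rw [this]
    field_simp
  have hga : g a = 0 := by simp [hg]
  have hg1a : g1 a = k := by simp [hg1]
  have hgc : g c = 0 := by
    simp only [hg]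
    rw [hca, Real.sin_pi]
  have hg1c : g1 c = -k := by
    simp only [hg1]
    rw [hca, Real.cos_pi]
    ring
  have hFa : 0 ≤ F a := hFnn a ⟨le_refl a, hab.le⟩
  have hFc : 0 ≤ F c := hFnn c ⟨hac.le, hcb⟩
  have hWa : W a = F a * k := by
    simp [hW, hga, hg1a]
  have hWc : W c = -(F c * k) := by
    simp only [hW, hgc, hg1c]
    ring
  nlinarith [mul_nonneg hFa hk0.le, mul_nonneg hFc hk0.le]
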